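/- The q-logarithm S_q satisfies the second-order q-difference equation (1-qx)·S_q(q^2 x) - (2-qx)·S_q(qx) + S_q(x) = qx for all x ∈ ℂ, where 0 < q < 1. -/

import Mathlib

noncomputable def qPoch (q x : ℂ) (k : ℕ) : ℂ := ∏ j ∈ Finset.range k, (1 - x * q ^ j)

noncomputable def Sq (q : ℝ) (x : ℂ) : ℂ :=
  -∑' k : ℕ, ((q : ℂ) ^ (k + 1) / (1 - (q : ℂ) ^ (k + 1))) * qPoch q x (k + 1)

noncomputable def Uq (q : ℝ) (x : ℂ) : ℂ :=
  ∑' k : ℕ, (q : ℂ) ^ (k + 1) * qPoch q x k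

lemma qPoch_succ (q x : ℂ) (k : ℕ) :
    qPoch q x (k + 1) = qPoch q x k * (1 - x * q ^ k) :=
  Finset.prod_range_succ _ _

lemma qPoch_succ' (q x : ℂ) (k : ℕ) :
    qPoch q x (k + 1) = (1 - x) * qPoch q (q * x) k := by
  rw [qPoch, qPoch, Finset.prod_range_succ', pow_zero, mul_one, mul_comm]
  congr 1
  apply Finset.prod_congr rfl
  intro j _
  rw [pow_succ']
  ring

lemma qPoch_bound (q : ℝ) (hq0 : 0 < q) (hq1 : q < 1) (x : ℂ) (k : ℕ) :
    ‖qPoch q x k‖ ≤ Real.exp (‖x‖ / (1 - q)) := by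
  have hq1' : (0:ℝ) < 1 - q := by linarith
  rw [qPoch]
  calc ‖∏ j ∈ Finset.range k, (1 - x * (q:ℂ) ^ j)‖
      = ∏ j ∈ Finset.range k, ‖1 - x * (q:ℂ) ^ j‖ := norm_prod _ _
    _ ≤ ∏ j ∈ Finset.range k, Real.exp (‖x‖ * q ^ j) := by
        apply Finset.prod_le_prod (fun j _ => norm_nonneg _)
        intro j _
        calc ‖1 - x * (q:ℂ) ^ j‖ ≤ ‖(1:ℂ)‖ + ‖x * (q:ℂ) ^ j‖ := norm_sub_le _ _
          _ = 1 + ‖x‖ * q ^ j := by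
              rw [norm_one, norm_mul, norm_pow, Complex.norm_real,
                Real.norm_of_nonneg hq0.le]
          _ ≤ Real.exp (‖x‖ * q ^ j) := by
              have := Real.add_one_le_exp (‖x‖ * q ^ j)
              linarith
    _ = Real.exp (∑ j ∈ Finset.range k, ‖x‖ * q ^ j) := (Real.exp_sum _ _).symm
    _ ≤ Real.exp (‖x‖ / (1 - q)) := by
        apply Real.exp_le_exp.mpr
        rw [← Finset.mul_sum]
        have hsum : ∑ j ∈ Finset.range k, q ^ j ≤ 1 / (1 - q) := by
          have h : (q ^ k - 1) / (q - 1) = (1 - q ^ k) / (1 - q) := by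
            rw [div_eq_div_iff (by linarith) (by linarith)]
            ring
          rw [geom_sum_eq (by linarith : q ≠ 1), h]
          gcongr
          nlinarith [pow_nonneg hq0.le k]
        calc ‖x‖ * ∑ j ∈ Finset.range k, q ^ j ≤ ‖x‖ * (1 / (1 - q)) :=
              mul_le_mul_of_nonneg_left hsum (norm_nonneg _)
          _ = ‖x‖ / (1 - q) := by ring

lemma summable_of_geo (q : ℝ) (hq0 : 0 < q) (hq1 : q < 1) (C : ℝ) (f : ℕ → ℂ)
    (h : ∀ k, ‖f k‖ ≤ C * q ^ k) : Summable f := by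
  apply Summable.of_norm
  exact Summable.of_nonneg_of_le (fun k => norm_nonneg _) h
    ((summable_geometric_of_lt_one hq0.le hq1).mul_left C)

lemma pow_ne_one' (q : ℝ) (hq0 : 0 < q) (hq1 : q < 1) (k : ℕ) :
    (q : ℂ) ^ (k + 1) ≠ 1 := by
  have h : q ^ (k + 1) < 1 := pow_lt_one₀ hq0.le hq1 k.succ_ne_zero
  intro hc
  have : ((q ^ (k + 1) : ℝ) : ℂ) = ((1 : ℝ) : ℂ) := by push_cast; simpa using hc
  have := Complex.ofReal_injective this
  linarith

lemma summable_S (q : ℝ) (hq0 : 0 < q) (hq1 : q < 1) (x : ℂ) :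
    Summable (fun k : ℕ => ((q : ℂ) ^ (k + 1) / (1 - (q : ℂ) ^ (k + 1))) * qPoch q x (k + 1)) := by
  have hq1' : (0:ℝ) < 1 - q := by linarith
  apply summable_of_geo q hq0 hq1 (q / (1 - q) * Real.exp (‖x‖ / (1 - q)))
  intro k
  have hden : ‖1 - (q : ℂ) ^ (k + 1)‖ = 1 - q ^ (k + 1) := by
    have h1 : (1 : ℂ) - (q : ℂ) ^ (k + 1) = ((1 - q ^ (k + 1) : ℝ) : ℂ) := by push_cast; ring
    rw [h1, Complex.norm_real, Real.norm_of_nonneg]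
    have : q ^ (k + 1) < 1 := pow_lt_one₀ hq0.le hq1 k.succ_ne_zero
    linarith
  have hnum : ‖(q : ℂ) ^ (k + 1)‖ = q ^ (k + 1) := by
    rw [norm_pow, Complex.norm_real, Real.norm_of_nonneg hq0.le]
  rw [norm_mul, norm_div, hden, hnum]
  have hd : 1 - q ≤ 1 - q ^ (k + 1) := by
    have : q ^ (k + 1) ≤ q := pow_le_of_le_one hq0.le hq1.le k.succ_ne_zero
    linarith
  have h1 : q ^ (k + 1) / (1 - q ^ (k + 1)) ≤ q ^ (k + 1) / (1 - q) :=
    div_le_div_of_nonneg_left (pow_nonneg hq0.le _) hq1' hd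
  have h2 : ‖qPoch q x (k + 1)‖ ≤ Real.exp (‖x‖ / (1 - q)) := qPoch_bound q hq0 hq1 x _
  calc q ^ (k + 1) / (1 - q ^ (k + 1)) * ‖qPoch q x (k + 1)‖
      ≤ q ^ (k + 1) / (1 - q) * Real.exp (‖x‖ / (1 - q)) := by
        apply mul_le_mul h1 h2 (norm_nonneg _)
        positivity
    _ = q / (1 - q) * Real.exp (‖x‖ / (1 - q)) * q ^ k := by rw [pow_succ]; ring

lemma summable_U (q : ℝ) (hq0 : 0 < q) (hq1 : q < 1) (x : ℂ) :
    Summable (fun k : ℕ => (q : ℂ) ^ (k + 1) * qPoch q x k) := by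
  apply summable_of_geo q hq0 hq1 (q * Real.exp (‖x‖ / (1 - q)))
  intro k
  rw [norm_mul, norm_pow, Complex.norm_real, Real.norm_of_nonneg hq0.le]
  calc q ^ (k + 1) * ‖qPoch q x k‖ ≤ q ^ (k + 1) * Real.exp (‖x‖ / (1 - q)) := by
        apply mul_le_mul_of_nonneg_left (qPoch_bound q hq0 hq1 x k) (pow_nonneg hq0.le _)
    _ = q * Real.exp (‖x‖ / (1 - q)) * q ^ k := by rw [pow_succ]; ring

lemma key1 (q : ℝ) (hq0 : 0 < q) (hq1 : q < 1) (x : ℂ) :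
    Sq q ((q : ℂ) * x) - Sq q x = -(x * Uq q ((q : ℂ) * x)) := by
  rw [Sq, Sq, Uq]
  rw [neg_sub_neg, ← Summable.tsum_sub (summable_S q hq0 hq1 x) (summable_S q hq0 hq1 ((q : ℂ) * x))]
  rw [← tsum_mul_left]
  rw [← tsum_neg]
  apply tsum_congr
  intro k
  have hne : (1 : ℂ) - (q : ℂ) ^ (k + 1) ≠ 0 :=
    sub_ne_zero.mpr (Ne.symm (pow_ne_one' q hq0 hq1 k))
  rw [qPoch_succ' q x k, qPoch_succ q ((q:ℂ)*x) k]
  field_simp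
  ring

lemma key2 (q : ℝ) (hq0 : 0 < q) (hq1 : q < 1) (x : ℂ) :
    Uq q x = (q : ℂ) + (q : ℂ) * (1 - x) * Uq q ((q : ℂ) * x) := by
  rw [Uq, Summable.tsum_eq_zero_add (summable_U q hq0 hq1 x)]
  congr 1
  · simp [qPoch]
  · rw [Uq, ← tsum_mul_left]
    apply tsum_congr
    intro k
    rw [qPoch_succ' q x k]
    ring

theorem qlog_second_order_qdifference (q : ℝ) (hq0 : 0 < q) (hq1 : q < 1) (x : ℂ) :
    (1 - (q : ℂ) * x) * Sq q ((q : ℂ) ^ 2 * x) - (2 - (q : ℂ) * x) * Sq q ((q : ℂ) * x)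
      + Sq q x = (q : ℂ) * x := by
  have hx : (q : ℂ) ^ 2 * x = (q : ℂ) * ((q : ℂ) * x) := by ring
  rw [hx]
  have h1 := key1 q hq0 hq1 x
  have h2 := key1 q hq0 hq1 ((q : ℂ) * x)
  have h3 := key2 q hq0 hq1 ((q : ℂ) * x)
  linear_combination (1 - (q : ℂ) * x) * h2 - h1 + x * h3
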